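/- Let (E,F) be a uniformly self-similar ends space. Then Homeo(E,F) is uniformly perfect: every element of Homeo(E,F) is a product of at most 3 commutators. -/

import Mathlib

section EndsSpace

variable {E : Type*} [TopologicalSpace E]

/-- A homeomorphism of pairs from `(A, A ∩ F)` to `(B, B ∩ F)`:
a homeomorphism of the subspaces `A → B` carrying `A ∩ F` onto `B ∩ F`. -/
def PairHomeo (F A B : Set E) : Prop :=
  ∃ h : A ≃ₜ B, ∀ x : A, ((h x : E) ∈ F ↔ (x : E) ∈ F)

/-- `(E, F)` is self-similar: every partition of `E` into finitely many pairwise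
disjoint nonempty clopen sets has a piece containing a clopen set `D` with
`(D, D ∩ F)` homeomorphic (as a pair) to `(E, F)`. -/
def SelfSimilarPair (F : Set E) : Prop :=
  ∀ (n : ℕ) (P : Fin n → Set E),
    (∀ i, IsClopen (P i)) → (∀ i, (P i).Nonempty) →
    Pairwise (Function.onFun Disjoint P) → (⋃ i, P i) = Set.univ →
    ∃ i, ∃ D : Set E, IsClopen D ∧ D ⊆ P i ∧ PairHomeo F D Set.univ

/-- The preorder `x ≼ y` on ends: every clopen neighborhood `U` of `y` contains a
clopen set `D` for which there are a clopen neighborhood `V` of `x` and a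
homeomorphism of pairs `(V, V ∩ F) → (D, D ∩ F)`. -/
def EndsLE (F : Set E) (x y : E) : Prop :=
  ∀ U : Set E, IsClopen U → y ∈ U →
    ∃ D : Set E, D ⊆ U ∧ IsClopen D ∧
      ∃ V : Set E, IsClopen V ∧ x ∈ V ∧ PairHomeo F V D

/-- The equivalence `x ∼ y`: `x ≼ y` and `y ≼ x`. -/
def EndsEquiv (F : Set E) (x y : E) : Prop := EndsLE F x y ∧ EndsLE F y x

/-- `x` is a maximal end. -/
def MaximalEnd (F : Set E) (x : E) : Prop := ∀ y, EndsLE F x y → EndsLE F y x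

/-- `M(E)`, the set of maximal ends. -/
def MaxSet (F : Set E) : Set E := {x | MaximalEnd F x}

/-- `(E, F)` is uniformly self-similar: it is self-similar, `M(E)` is a single
`∼`-equivalence class, and `M(E)` is homeomorphic to the Cantor space `ℕ → Bool`. -/
def UniformlySelfSimilar (F : Set E) : Prop :=
  SelfSimilarPair F ∧
  (∃ x, MaxSet F = {y | EndsEquiv F x y}) ∧
  Nonempty (↥(MaxSet F) ≃ₜ (ℕ → Bool))

/-- The group `Homeo(E,F)` of homeomorphisms of `E` preserving `F`,
as a subgroup of the permutation group of `E`. -/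
def EndsHomeo (F : Set E) : Subgroup (Equiv.Perm E) where
  carrier := {h | Continuous h ∧ Continuous h.symm ∧ ∀ x, h x ∈ F ↔ x ∈ F}
  one_mem' := ⟨continuous_id, continuous_id, fun _ => Iff.rfl⟩
  mul_mem' := by
    rintro a b ⟨ha1, ha2, ha3⟩ ⟨hb1, hb2, hb3⟩
    refine ⟨?_, ?_, fun x => ?_⟩
    · exact ha1.comp hb1
    · exact hb2.comp ha2
    · exact (ha3 (b x)).trans (hb3 x)
  inv_mem' := by
    rintro a ⟨ha1, ha2, ha3⟩
    refine ⟨ha2, ha1, fun x => ?_⟩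
    have h := ha3 (a⁻¹ x)
    rw [show a (a⁻¹ x) = x from a.apply_symm_apply x] at h
    exact h.symm

/-- A half-space of `(E,F)`: a clopen set meeting `M(E)` in a nonempty proper subset. -/
def IsHalfSpace (F H : Set E) : Prop :=
  IsClopen H ∧ (H ∩ MaxSet F).Nonempty ∧ H ∩ MaxSet F ⊂ MaxSet F

/-- `φ` is an `H`-translation: the sets `φⁿ(H)`, `n ∈ ℤ`, are pairwise disjoint. -/
def IsHTranslation (H : Set E) (φ : Equiv.Perm E) : Prop :=
  ∀ m n : ℤ, m ≠ n → Disjoint ((φ ^ m) '' H) ((φ ^ n) '' H)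

/-- A homeomorphism is supported on `H` if it fixes every point outside `H`. -/
def SupportedOn (H : Set E) (h : Equiv.Perm E) : Prop := ∀ x ∉ H, h x = x

end EndsSpace
section Tools

open Set Topology
open scoped Classical

variable {E : Type*} [TopologicalSpace E]

/-- A "good map": a concrete homeomorphism of pairs given by global functions. -/
structure IsGoodMap (F A B : Set E) (f f' : E → E) : Prop where
  mapsTo : Set.MapsTo f A B
  mapsTo' : Set.MapsTo f' B A
  left : ∀ x ∈ A, f' (f x) = x
  right : ∀ y ∈ B, f (f' y) = y
  cont : ContinuousOn f A
  cont' : ContinuousOn f' B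
  mem_iff : ∀ x ∈ A, (f x ∈ F ↔ x ∈ F)

/-- Existence of a good map. -/
def GPH (F A B : Set E) : Prop := ∃ f f', IsGoodMap F A B f f'

theorem IsGoodMap.id (F A : Set E) : IsGoodMap F A A _root_.id _root_.id where
  mapsTo := fun _ hx => hx
  mapsTo' := fun _ hx => hx
  left := fun _ _ => rfl
  right := fun _ _ => rfl
  cont := continuousOn_id
  cont' := continuousOn_id
  mem_iff := fun _ _ => Iff.rfl

theorem IsGoodMap.symm {F A B : Set E} {f f' : E → E} (h : IsGoodMap F A B f f') :
    IsGoodMap F B A f' f where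
  mapsTo := h.mapsTo'
  mapsTo' := h.mapsTo
  left := h.right
  right := h.left
  cont := h.cont'
  cont' := h.cont
  mem_iff := fun y hy => by
    have := h.mem_iff (f' y) (h.mapsTo' hy)
    rw [h.right y hy] at this
    exact this.symm

theorem IsGoodMap.image_eq {F A B : Set E} {f f' : E → E} (h : IsGoodMap F A B f f') :
    f '' A = B := by
  apply subset_antisymm
  · rintro y ⟨x, hx, rfl⟩; exact h.mapsTo hx
  · intro y hy; exact ⟨f' y, h.mapsTo' hy, h.right y hy⟩

theorem IsGoodMap.comp {F A B C : Set E} {f f' g g' : E → E}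
    (h1 : IsGoodMap F A B f f') (h2 : IsGoodMap F B C g g') :
    IsGoodMap F A C (g ∘ f) (f' ∘ g') where
  mapsTo := fun _ hx => h2.mapsTo (h1.mapsTo hx)
  mapsTo' := fun _ hy => h1.mapsTo' (h2.mapsTo' hy)
  left := fun x hx => by
    simp only [Function.comp_apply, h2.left _ (h1.mapsTo hx), h1.left x hx]
  right := fun y hy => by
    simp only [Function.comp_apply, h1.right _ (h2.mapsTo' hy), h2.right y hy]
  cont := h2.cont.comp h1.cont h1.mapsTo
  cont' := h1.cont'.comp h2.cont' h2.mapsTo'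
  mem_iff := fun x hx => by
    simp only [Function.comp_apply]
    exact (h2.mem_iff _ (h1.mapsTo hx)).trans (h1.mem_iff x hx)

theorem IsGoodMap.restrict {F A B : Set E} {f f' : E → E} (h : IsGoodMap F A B f f')
    {A' : Set E} (hA' : A' ⊆ A) : IsGoodMap F A' (f '' A') f f' where
  mapsTo := fun x hx => ⟨x, hx, rfl⟩
  mapsTo' := by rintro y ⟨x, hx, rfl⟩; rwa [h.left x (hA' hx)]
  left := fun x hx => h.left x (hA' hx)
  right := by rintro y ⟨x, hx, rfl⟩; rw [h.left x (hA' hx)]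
  cont := h.cont.mono hA'
  cont' := h.cont'.mono (by rintro y ⟨x, hx, rfl⟩; exact h.mapsTo (hA' hx))
  mem_iff := fun x hx => h.mem_iff x (hA' hx)

theorem IsGoodMap.image_isClopen {F A B : Set E} {f f' : E → E} (h : IsGoodMap F A B f f')
    (hB : IsClopen B) {A' : Set E} (hA' : A' ⊆ A) (hA'c : IsClopen A') :
    IsClopen (f '' A') := by
  have key : f '' A' = B ∩ f' ⁻¹' A' := by
    apply subset_antisymm
    · rintro y ⟨x, hx, rfl⟩
      exact ⟨h.mapsTo (hA' hx), by rw [mem_preimage, h.left x (hA' hx)]; exact hx⟩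
    · rintro y ⟨hyB, hy⟩
      exact ⟨f' y, hy, h.right y hyB⟩
  rw [key]
  exact ⟨h.cont'.preimage_isClosed_of_isClosed hB.isClosed hA'c.isClosed,
    h.cont'.isOpen_inter_preimage hB.isOpen hA'c.isOpen⟩

private theorem dite_homeo_continuousOn {A B : Set E} (g : A ≃ₜ B) :
    ContinuousOn (fun x => if hx : x ∈ A then ((g ⟨x, hx⟩ : B) : E) else x) A := by
  rw [continuousOn_iff_continuous_restrict]
  have : (A.restrict fun x => if hx : x ∈ A then ((g ⟨x, hx⟩ : B) : E) else x)
      = fun x : A => (g x : E) := by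
    funext x
    simp [Set.restrict]
  show Continuous (A.restrict fun x => if hx : x ∈ A then ((g ⟨x, hx⟩ : B) : E) else x)
  rw [this]
  exact continuous_subtype_val.comp g.continuous

theorem PairHomeo.gph {F A B : Set E} (h : PairHomeo F A B) : GPH F A B := by
  classical
  obtain ⟨e, he⟩ := h
  refine ⟨fun x => if hx : x ∈ A then (e ⟨x, hx⟩ : E) else x,
    fun y => if hy : y ∈ B then (e.symm ⟨y, hy⟩ : E) else y, ?_, ?_, ?_, ?_, ?_, ?_, ?_⟩
  · intro x hx
    simp only [hx, dif_pos]
    exact (e ⟨x, hx⟩).2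
  · intro y hy
    simp only [hy, dif_pos]
    exact (e.symm ⟨y, hy⟩).2
  · intro x hx
    have h1 : (e ⟨x, hx⟩ : E) ∈ B := (e ⟨x, hx⟩).2
    simp only [hx, dif_pos, h1]
    rw [show (⟨(e ⟨x, hx⟩ : E), h1⟩ : B) = e ⟨x, hx⟩ from Subtype.coe_eta _ _]
    rw [e.symm_apply_apply]
  · intro y hy
    have h1 : (e.symm ⟨y, hy⟩ : E) ∈ A := (e.symm ⟨y, hy⟩).2
    simp only [hy, dif_pos, h1]
    rw [show (⟨(e.symm ⟨y, hy⟩ : E), h1⟩ : A) = e.symm ⟨y, hy⟩ from Subtype.coe_eta _ _]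
    rw [e.apply_symm_apply]
  · exact dite_homeo_continuousOn e
  · exact dite_homeo_continuousOn e.symm
  · intro x hx
    simp only [hx, dif_pos]
    exact he ⟨x, hx⟩

theorem GPH.pairHomeo {F A B : Set E} (h : GPH F A B) : PairHomeo F A B := by
  obtain ⟨f, f', hg⟩ := h
  refine ⟨⟨⟨fun x => ⟨f x, hg.mapsTo x.2⟩, fun y => ⟨f' y, hg.mapsTo' y.2⟩,
      fun x => Subtype.ext (hg.left x x.2), fun y => Subtype.ext (hg.right y y.2)⟩,
      ?_, ?_⟩, fun x => hg.mem_iff x x.2⟩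
  · exact Continuous.subtype_mk (continuousOn_iff_continuous_restrict.1 hg.cont) _
  · exact Continuous.subtype_mk (continuousOn_iff_continuous_restrict.1 hg.cont') _

theorem GPH.symm {F A B : Set E} (h : GPH F A B) : GPH F B A := by
  obtain ⟨f, f', hg⟩ := h; exact ⟨f', f, hg.symm⟩

theorem GPH.comp {F A B C : Set E} (h1 : GPH F A B) (h2 : GPH F B C) : GPH F A C := by
  obtain ⟨f, f', hg1⟩ := h1; obtain ⟨g, g', hg2⟩ := h2
  exact ⟨g ∘ f, f' ∘ g', hg1.comp hg2⟩

theorem mem_endsHomeo_iff {F : Set E} {g : Equiv.Perm E} :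
    g ∈ EndsHomeo F ↔ Continuous g ∧ Continuous g.symm ∧ ∀ x, g x ∈ F ↔ x ∈ F :=
  Iff.rfl

theorem IsGoodMap.ofPerm {F : Set E} {g : Equiv.Perm E} (hg : g ∈ EndsHomeo F) (A : Set E) :
    IsGoodMap F A (g '' A) g g.symm where
  mapsTo := fun x hx => ⟨x, hx, rfl⟩
  mapsTo' := by rintro y ⟨x, hx, rfl⟩; rwa [g.symm_apply_apply]
  left := fun x _ => g.symm_apply_apply x
  right := fun y _ => g.apply_symm_apply y
  cont := hg.1.continuousOn
  cont' := hg.2.1.continuousOn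
  mem_iff := fun x _ => hg.2.2 x

end Tools
section Tools2

open Set Topology
open scoped Classical

variable {E : Type*} [TopologicalSpace E]

theorem endsLE_trans {F : Set E} {x y z : E} (hxy : EndsLE F x y) (hyz : EndsLE F y z) :
    EndsLE F x z := by
  intro U hU hzU
  obtain ⟨D, hDU, hDc, V, hVc, hyV, hVD⟩ := hyz U hU hzU
  obtain ⟨D', hD'V, hD'c, W, hWc, hxW, hWD'⟩ := hxy V hVc hyV
  obtain ⟨f, f', hf⟩ := hVD.gph
  refine ⟨f '' D', ?_, hf.image_isClopen hDc hD'V hD'c, W, hWc, hxW, ?_⟩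
  · exact (Set.image_mono (f := f) hD'V).trans (le_of_eq hf.image_eq) |>.trans hDU
  · exact (hWD'.gph.comp ⟨f, f', hf.restrict hD'V⟩).pairHomeo

/-- A vast point: every clopen neighborhood contains a clopen copy of the whole pair. -/
def Vast (F : Set E) (z : E) : Prop :=
  ∀ U, IsClopen U → z ∈ U → ∃ D, IsClopen D ∧ D ⊆ U ∧ GPH F Set.univ D

theorem Vast.le {F : Set E} {z : E} (hz : Vast F z) (y : E) : EndsLE F y z := by
  intro U hU hzU
  obtain ⟨D, hDc, hDU, hD⟩ := hz U hU hzU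
  exact ⟨D, hDU, hDc, Set.univ, isClopen_univ, Set.mem_univ y, hD.pairHomeo⟩

theorem Vast.maximal {F : Set E} {z : E} (hz : Vast F z) : MaximalEnd F z :=
  fun y _ => hz.le y

theorem Vast.of_le {F : Set E} {z m : E} (hz : Vast F z) (hle : EndsLE F z m) :
    Vast F m := by
  intro U hU hmU
  obtain ⟨D, hDU, hDc, V, hVc, hzV, hVD⟩ := hle U hU hmU
  obtain ⟨f, f', hf⟩ := hVD.gph
  obtain ⟨C, hCc, hCV, hC⟩ := hz V hVc hzV
  refine ⟨f '' C, hf.image_isClopen hDc hCV hCc, ?_, hC.comp ⟨f, f', hf.restrict hCV⟩⟩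
  exact (Set.image_mono (f := f) hCV).trans (le_of_eq hf.image_eq) |>.trans hDU

theorem gph_nonempty [Nonempty E] {F C : Set E} (h : GPH F Set.univ C) : C.Nonempty := by
  obtain ⟨f, f', hf⟩ := h
  exact ⟨f (Classical.arbitrary E), hf.mapsTo (Set.mem_univ _)⟩

variable [Nonempty E] [CompactSpace E] [TopologicalSpace.MetrizableSpace E]
  [TotallyDisconnectedSpace E]

/-- A fine clopen partition subordinate to a monotone predicate. -/
theorem exists_fine_partition (W : Set E → Prop)
    (hW : ∀ x : E, ∃ U, IsClopen U ∧ x ∈ U ∧ W U)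
    (hWmono : ∀ U V : Set E, W U → V ⊆ U → W V) :
    ∃ n, ∃ P : Fin n → Set E, (∀ i, IsClopen (P i)) ∧ (∀ i, (P i).Nonempty) ∧
      Pairwise (Function.onFun Disjoint P) ∧ (⋃ i, P i) = Set.univ ∧ ∀ i, W (P i) := by
  choose U hUc hxU hUW using hW
  obtain ⟨t, ht⟩ := isCompact_univ.elim_finite_subcover U (fun x => (hUc x).isOpen)
    (fun x _ => Set.mem_iUnion.2 ⟨x, hxU x⟩)
  set L := t.toList with hL
  set k := L.length with hk
  set V : Fin k → Set E := fun i => U (L.get i) \ ⋃ (j : Fin k) (_ : j < i), U (L.get j) with hV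
  have hVc : ∀ i, IsClopen (V i) := by
    intro i
    apply (hUc _).diff
    have : (⋃ (j : Fin k) (_ : j < i), U (L.get j))
        = ⋃ j ∈ {j : Fin k | j < i}, U (L.get j) := by rfl
    rw [this]
    exact (Set.toFinite _).isClopen_biUnion (fun j _ => hUc _)
  have hVd : ∀ i j : Fin k, i < j → Disjoint (V i) (V j) := by
    intro i j hij
    apply Set.disjoint_left.2
    intro x hxi hxj
    exact hxj.2 (Set.mem_iUnion.2 ⟨i, Set.mem_iUnion.2 ⟨hij, hxi.1⟩⟩)
  have hVcover : ∀ x : E, ∃ i, x ∈ V i := by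
    intro x
    have hx : ∃ i : Fin k, x ∈ U (L.get i) := by
      have := ht (Set.mem_univ x)
      simp only [Set.mem_iUnion] at this
      obtain ⟨y, hyt, hyx⟩ := this
      have : y ∈ L := by rw [hL]; exact Finset.mem_toList.2 hyt
      obtain ⟨i, hi⟩ := List.get_of_mem this
      exact ⟨i, by rwa [hi]⟩
    classical
    obtain ⟨i, hi, hmin⟩ := Finset.exists_min_image (Finset.univ.filter fun i => x ∈ U (L.get i))
      (fun i => i) (by
        obtain ⟨i, hi⟩ := hx
        exact ⟨i, Finset.mem_filter.2 ⟨Finset.mem_univ _, hi⟩⟩)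
    refine ⟨i, (Finset.mem_filter.1 hi).2, ?_⟩
    intro hmem
    simp only [Set.mem_iUnion] at hmem
    obtain ⟨j, hji, hxj⟩ := hmem
    have := hmin j (Finset.mem_filter.2 ⟨Finset.mem_univ _, hxj⟩)
    exact absurd hji (not_lt.2 this)
  -- filter out empty pieces
  set S := {i : Fin k // (V i).Nonempty} with hS
  set n := Fintype.card S with hn
  set e := (Fintype.equivFin S).symm with he
  refine ⟨n, fun j => V (e j).1, fun j => hVc _, fun j => (e j).2, ?_, ?_, ?_⟩
  · intro i j hij
    have : (e i).1 ≠ (e j).1 := by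
      intro hcontra
      exact hij (by
        have := Subtype.ext hcontra
        exact e.injective this ▸ rfl)
    rcases lt_or_gt_of_ne this with h | h
    · exact hVd _ _ h
    · exact (hVd _ _ h).symm
  · apply Set.eq_univ_of_forall
    intro x
    obtain ⟨i, hi⟩ := hVcover x
    refine Set.mem_iUnion.2 ⟨e.symm ⟨i, ⟨x, hi⟩⟩, ?_⟩
    simp only [Equiv.apply_symm_apply]
    exact hi
  · intro j
    exact hWmono _ _ (hUW _) Set.diff_subset

end Tools2
section Tools3

open Set Topology
open scoped Classical

set_option linter.unusedSectionVars false

variable {E : Type*} [TopologicalSpace E] [Nonempty E] [CompactSpace E]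
  [TopologicalSpace.MetrizableSpace E] [TotallyDisconnectedSpace E]

theorem exists_small_copy {F : Set E} (hss : SelfSimilarPair F) :
    ∀ (C : Set E), IsClopen C → GPH F Set.univ C →
      letI : MetricSpace E := TopologicalSpace.metrizableSpaceMetric E
      ∀ δ : ℝ, 0 < δ → ∃ D : Set E, IsClopen D ∧ D ⊆ C ∧ GPH F Set.univ D ∧
        ∃ x, D ⊆ Metric.ball x δ := by
  letI : MetricSpace E := TopologicalSpace.metrizableSpaceMetric E
  intro C hC hgC δ hδ
  obtain ⟨w, w', hw⟩ := hgC
  have hwc : Continuous w := continuousOn_univ.1 hw.cont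
  have huc : UniformContinuous w := CompactSpace.uniformContinuous_of_continuous hwc
  obtain ⟨δ', hδ', hd⟩ := Metric.uniformContinuous_iff.1 huc δ hδ
  obtain ⟨n, P, hPc, hPne, hPd, hPu, hPW⟩ := exists_fine_partition
    (fun U => ∃ c, U ⊆ Metric.ball c (δ'/2))
    (fun x => by
      obtain ⟨V, hVc, hxV, hVb⟩ := compact_exists_isClopen_in_isOpen
        (Metric.isOpen_ball (x := x) (ε := δ'/2)) (Metric.mem_ball_self (by linarith))
      exact ⟨V, hVc, hxV, x, hVb⟩)
    (fun (U V : Set E) hU hVU => by obtain ⟨c, hc⟩ := hU; exact ⟨c, hVU.trans hc⟩)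
  obtain ⟨i, D', hD'c, hD'P, hD'⟩ := hss n P hPc hPne hPd hPu
  have hgD' : GPH F Set.univ D' := hD'.gph.symm
  refine ⟨w '' D', hw.image_isClopen hC (Set.subset_univ _) hD'c, ?_, ?_, ?_⟩
  · rintro y ⟨x, _, rfl⟩; exact hw.mapsTo (Set.mem_univ x)
  · exact hgD'.comp ⟨w, w', hw.restrict (Set.subset_univ _)⟩
  · rcases D'.eq_empty_or_nonempty with h | ⟨x0, hx0⟩
    · exact ⟨Classical.arbitrary E, by rw [h]; simp⟩
    · refine ⟨w x0, ?_⟩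
      rintro y ⟨x, hx, rfl⟩
      obtain ⟨c, hc⟩ := hPW i
      have h1 : dist x x0 < δ' := by
        have hxb := hc (hD'P hx)
        have hx0b := hc (hD'P hx0)
        rw [Metric.mem_ball] at hxb hx0b
        calc dist x x0 ≤ dist x c + dist c x0 := dist_triangle _ _ _
          _ < δ'/2 + δ'/2 := by rw [dist_comm c x0] at *; exact add_lt_add hxb hx0b
          _ = δ' := by ring
      exact Metric.mem_ball.2 (hd h1)

theorem exists_vast {F : Set E} (hss : SelfSimilarPair F) : ∃ z, Vast F z := by
  letI : MetricSpace E := TopologicalSpace.metrizableSpaceMetric E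
  have step := exists_small_copy hss
  -- a recursively defined nested sequence of small copies
  let T := {C : Set E // IsClopen C ∧ GPH F Set.univ C}
  have next : ∀ (p : T) (n : ℕ), {D : Set E // IsClopen D ∧ D ⊆ p.1 ∧ GPH F Set.univ D ∧
      ∃ x, D ⊆ Metric.ball x (1/(n+1))} := by
    intro p n
    have h := step p.1 p.2.1 p.2.2 (1/(n+1)) (by positivity)
    exact ⟨h.choose, h.choose_spec.1, h.choose_spec.2.1, h.choose_spec.2.2.1,
      h.choose_spec.2.2.2⟩
  let seq : ℕ → T := fun n => Nat.rec
    ⟨Set.univ, isClopen_univ, _root_.id, _root_.id, IsGoodMap.id F Set.univ⟩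
    (fun n p => ⟨(next p n).1, (next p n).2.1, (next p n).2.2.2.1⟩) n
  have hsub : ∀ n, (seq (n+1)).1 ⊆ (seq n).1 := fun n => (next (seq n) n).2.2.1
  have hsmall : ∀ n, ∃ x, (seq (n+1)).1 ⊆ Metric.ball x (1/(n+1)) :=
    fun n => (next (seq n) n).2.2.2.2
  have hne : ∀ n, (seq n).1.Nonempty := fun n => gph_nonempty (seq n).2.2
  have hinter : (⋂ n, (seq n).1).Nonempty := by
    apply IsCompact.nonempty_iInter_of_sequence_nonempty_isCompact_isClosed
      (fun n => (seq n).1) hsub hne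
    · exact isCompact_univ.of_isClosed_subset (seq 0).2.1.isClosed (Set.subset_univ _)
    · exact fun n => (seq n).2.1.isClosed
  obtain ⟨z, hz⟩ := hinter
  simp only [Set.mem_iInter] at hz
  refine ⟨z, ?_⟩
  intro U hU hzU
  obtain ⟨ε, hε, hball⟩ := Metric.isOpen_iff.1 hU.isOpen z hzU
  obtain ⟨n, hnn⟩ := exists_nat_gt (2/ε)
  have hn1 : (1:ℝ)/(n+1) < ε/2 := by
    rw [div_lt_iff₀ (by positivity)]
    rw [div_lt_iff₀ hε] at hnn
    have : (n:ℝ) < n+1 := by linarith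
    nlinarith
  refine ⟨(seq (n+1)).1, (seq (n+1)).2.1, ?_, (seq (n+1)).2.2⟩
  intro y hy
  obtain ⟨x, hx⟩ := hsmall n
  apply hball
  have h1 : dist y x < 1/(n+1) := Metric.mem_ball.1 (hx hy)
  have h2 : dist z x < 1/(n+1) := Metric.mem_ball.1 (hx (hz (n+1)))
  rw [Metric.mem_ball]
  calc dist y z ≤ dist y x + dist x z := dist_triangle _ _ _
    _ < 1/(n+1) + 1/(n+1) := by rw [dist_comm x z]; exact add_lt_add h1 h2
    _ < ε/2 + ε/2 := by exact add_lt_add hn1 hn1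
    _ = ε := by ring

/-- Under uniform self-similarity, every maximal end is vast. -/
theorem maximal_vast {F : Set E} (huss : UniformlySelfSimilar F) {m : E}
    (hm : m ∈ MaxSet F) : Vast F m := by
  obtain ⟨z, hz⟩ := exists_vast huss.1
  obtain ⟨x0, hx0⟩ := huss.2.1
  have hzM : z ∈ MaxSet F := hz.maximal
  have h1 : EndsEquiv F x0 z := by rw [hx0] at hzM; exact hzM
  have h2 : EndsEquiv F x0 m := by rw [hx0] at hm; exact hm
  exact hz.of_le (endsLE_trans h1.2 h2.1)

theorem maxSet_infinite {F : Set E} (huss : UniformlySelfSimilar F) :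
    (MaxSet F).Infinite := by
  obtain ⟨e⟩ := huss.2.2
  rw [← Set.infinite_coe_iff]
  have : Infinite (ℕ → Bool) := by
    apply Infinite.of_injective (fun n : ℕ => fun k : ℕ => decide (k < n))
    intro a b hab
    by_contra hne
    rcases lt_or_gt_of_ne hne with h | h
    · have := congrFun hab a
      simp [h, lt_irrefl] at this
    · have := congrFun hab b
      simp [h, lt_irrefl] at this
  exact Infinite.of_injective e.symm e.symm.injective

end Tools3
section Glue

open Set Topology Filter
open scoped Classical

set_option linter.unusedSectionVars false

variable {E : Type*} [TopologicalSpace E] [Nonempty E] [CompactSpace E]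
  [TopologicalSpace.MetrizableSpace E] [TotallyDisconnectedSpace E]

/-- Glue countably many partial maps over disjoint pieces, identity elsewhere. -/
noncomputable def glueFn (X : ℤ → Set E) (f : ℤ → E → E) (x : E) : E :=
  if h : ∃ n, x ∈ X n then f h.choose x else x

theorem glueFn_mem {X : ℤ → Set E} {f : ℤ → E → E}
    (hd : ∀ m n, m ≠ n → Disjoint (X m) (X n)) {n : ℤ} {x : E} (hx : x ∈ X n) :
    glueFn X f x = f n x := by
  have hex : ∃ m, x ∈ X m := ⟨n, hx⟩
  have : hex.choose = n := by
    by_contra hne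
    exact (hd _ _ hne).le_bot ⟨hex.choose_spec, hx⟩
  rw [glueFn, dif_pos hex, this]

theorem glueFn_not_mem {X : ℤ → Set E} {f : ℤ → E → E} {x : E} (hx : ∀ n, x ∉ X n) :
    glueFn X f x = x := by
  rw [glueFn, dif_neg]
  rintro ⟨n, hn⟩
  exact hx n hn

theorem glueFn_continuous (X T : ℤ → Set E) (f : ℤ → E → E) {zp zm : E}
    (hXc : ∀ n, IsClopen (X n))
    (hd : ∀ m n, m ≠ n → Disjoint (X m) (X n))
    (hmaps : ∀ n, Set.MapsTo (f n) (X n) (T n))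
    (hcont : ∀ n, ContinuousOn (f n) (X n))
    (hne : zp ≠ zm)
    (hzp : ∀ n, zp ∉ X n) (hzm : ∀ n, zm ∉ X n)
    (hsXp : ∀ V, IsOpen V → zp ∈ V → ∃ N : ℤ, ∀ n ≥ N, X n ⊆ V)
    (hsXm : ∀ V, IsOpen V → zm ∈ V → ∃ N : ℤ, ∀ n ≤ N, X n ⊆ V)
    (hsTp : ∀ V, IsOpen V → zp ∈ V → ∃ N : ℤ, ∀ n ≥ N, T n ⊆ V)
    (hsTm : ∀ V, IsOpen V → zm ∈ V → ∃ N : ℤ, ∀ n ≤ N, T n ⊆ V) :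
    Continuous (glueFn X f) := by
  rw [continuous_iff_continuousAt]
  intro x
  by_cases hx : ∃ n, x ∈ X n
  · obtain ⟨n, hn⟩ := hx
    have h1 : ContinuousAt (f n) x := (hcont n).continuousAt ((hXc n).isOpen.mem_nhds hn)
    apply h1.congr
    apply Filter.eventuallyEq_of_mem ((hXc n).isOpen.mem_nhds hn)
    intro y hy
    exact (glueFn_mem hd hy).symm
  · push_neg at hx
    rcases eq_or_ne x zp with rfl | hxzp
    · -- continuity at zp
      rw [ContinuousAt, Filter.tendsto_def]
      intro V hV
      rw [glueFn_not_mem hx] at hV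
      obtain ⟨O, hOV, hOo, hzO⟩ := mem_nhds_iff.1 hV
      obtain ⟨V', hV'c, hzV', hV'O⟩ := compact_exists_isClopen_in_isOpen hOo hzO
      obtain ⟨Q, hQc, hzQ, hQ⟩ := compact_exists_isClopen_in_isOpen
        (isOpen_compl_singleton (x := zm)) hne
      obtain ⟨N1, hN1⟩ := hsTp V' hV'c.isOpen hzV'
      obtain ⟨Nm, hNm⟩ := hsXm Qᶜ hQc.compl.isOpen (by
        simp only [Set.mem_compl_iff]
        intro hc
        exact hQ hc rfl)
      set N := max N1 (Nm + 1) with hN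
      set U := (V' ∩ Q) \ ⋃ n ∈ Finset.Icc Nm N, X n with hU
      have hUnhds : U ∈ 𝓝 x := by
        apply IsOpen.mem_nhds
        · exact (hV'c.inter hQc).isOpen.sdiff
            (Set.Finite.isClosed_biUnion (Finset.finite_toSet _) fun n _ => (hXc n).isClosed)
        · exact ⟨⟨hzV', hzQ⟩, by
            simp only [Set.mem_iUnion]
            rintro ⟨n, -, hn⟩
            exact hx n hn⟩
      apply Filter.mem_of_superset hUnhds
      intro y hy
      simp only [Set.mem_preimage]
      by_cases hyX : ∃ n, y ∈ X n
      · obtain ⟨n, hn⟩ := hyX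
        rw [glueFn_mem hd hn]
        have hnN : n > N := by
          rcases lt_trichotomy n Nm with h | h | h
          · exact absurd (hNm n (le_of_lt h) hn) (fun hc => hc hy.1.2)
          · subst h
            exact absurd hn (by
              intro hc
              exact hy.2 (Set.mem_iUnion.2 ⟨n, Set.mem_iUnion.2
                ⟨Finset.mem_Icc.2 ⟨le_refl _, le_max_of_le_right (by omega)⟩, hc⟩⟩))
          · by_contra hnN
            push_neg at hnN
            exact hy.2 (Set.mem_iUnion.2 ⟨n, Set.mem_iUnion.2
              ⟨Finset.mem_Icc.2 ⟨le_of_lt h, hnN⟩, hn⟩⟩)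
        exact hOV (hV'O (hN1 n (le_of_lt (lt_of_le_of_lt (le_max_left _ _) hnN)) (hmaps n hn)))
      · push_neg at hyX
        rw [glueFn_not_mem hyX]
        exact hOV (hV'O hy.1.1)
    · rcases eq_or_ne x zm with rfl | hxzm
      · -- continuity at zm (symmetric)
        rw [ContinuousAt, Filter.tendsto_def]
        intro V hV
        rw [glueFn_not_mem hx] at hV
        obtain ⟨O, hOV, hOo, hzO⟩ := mem_nhds_iff.1 hV
        obtain ⟨V', hV'c, hzV', hV'O⟩ := compact_exists_isClopen_in_isOpen hOo hzO
        obtain ⟨Q, hQc, hzQ, hQ⟩ := compact_exists_isClopen_in_isOpen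
          (isOpen_compl_singleton (x := zp)) (Ne.symm hne)
        obtain ⟨N1, hN1⟩ := hsTm V' hV'c.isOpen hzV'
        obtain ⟨Np, hNp⟩ := hsXp Qᶜ hQc.compl.isOpen (by
          simp only [Set.mem_compl_iff]
          intro hc
          exact hQ hc rfl)
        set N := min N1 (Np - 1) with hN
        set U := (V' ∩ Q) \ ⋃ n ∈ Finset.Icc N Np, X n with hU
        have hUnhds : U ∈ 𝓝 x := by
          apply IsOpen.mem_nhds
          · exact (hV'c.inter hQc).isOpen.sdiff
              (Set.Finite.isClosed_biUnion (Finset.finite_toSet _) fun n _ => (hXc n).isClosed)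
          · exact ⟨⟨hzV', hzQ⟩, by
              simp only [Set.mem_iUnion]
              rintro ⟨n, -, hn⟩
              exact hx n hn⟩
        apply Filter.mem_of_superset hUnhds
        intro y hy
        simp only [Set.mem_preimage]
        by_cases hyX : ∃ n, y ∈ X n
        · obtain ⟨n, hn⟩ := hyX
          rw [glueFn_mem hd hn]
          have hnN : n < N := by
            rcases lt_trichotomy n Np with h | h | h
            · by_contra hnN
              push_neg at hnN
              exact hy.2 (Set.mem_iUnion.2 ⟨n, Set.mem_iUnion.2
                ⟨Finset.mem_Icc.2 ⟨hnN, le_of_lt h⟩, hn⟩⟩)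
            · subst h
              exact absurd hn (by
                intro hc
                exact hy.2 (Set.mem_iUnion.2 ⟨n, Set.mem_iUnion.2
                  ⟨Finset.mem_Icc.2 ⟨min_le_of_right_le (by omega), le_refl _⟩, hc⟩⟩))
            · exact absurd (hNp n (le_of_lt h) hn) (fun hc => hc hy.1.2)
          exact hOV (hV'O (hN1 n (le_of_lt (lt_of_lt_of_le hnN (min_le_left _ _))) (hmaps n hn)))
        · push_neg at hyX
          rw [glueFn_not_mem hyX]
          exact hOV (hV'O hy.1.1)
      · -- continuity away from the chain and the limit points: locally the identity
        obtain ⟨P, hPc, hxP, hP⟩ := compact_exists_isClopen_in_isOpen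
          (IsOpen.inter (isOpen_compl_singleton (x := zp)) (isOpen_compl_singleton (x := zm)))
          ⟨hxzp, hxzm⟩
        obtain ⟨Np, hNp⟩ := hsXp Pᶜ hPc.compl.isOpen (by
          intro hc
          exact (hP hc).1 rfl)
        obtain ⟨Nm, hNm⟩ := hsXm Pᶜ hPc.compl.isOpen (by
          intro hc
          exact (hP hc).2 rfl)
        set P' := P \ ⋃ n ∈ Finset.Icc Nm Np, X n with hP'
        have hP'o : IsOpen P' := hPc.isOpen.sdiff
          (Set.Finite.isClosed_biUnion (Finset.finite_toSet _) fun n _ => (hXc n).isClosed)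
        have hxP' : x ∈ P' := ⟨hxP, by
          simp only [Set.mem_iUnion]
          rintro ⟨n, -, hn⟩
          exact hx n hn⟩
        have : ContinuousAt _root_.id x := continuousAt_id
        apply this.congr
        apply Filter.eventuallyEq_of_mem (hP'o.mem_nhds hxP')
        intro y hy
        symm
        apply glueFn_not_mem
        intro n hn
        rcases le_or_gt n Nm with h | h
        · exact hNm n h hn hy.1
        rcases le_or_gt n Np with h2 | h2
        · exact hy.2 (Set.mem_iUnion.2 ⟨n, Set.mem_iUnion.2
            ⟨Finset.mem_Icc.2 ⟨le_of_lt h, h2⟩, hn⟩⟩)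
        · exact hNp n (le_of_lt h2) hn hy.1

end Glue
section GluePerm

open Set Topology Filter
open scoped Classical

set_option linter.unusedSectionVars false

variable {E : Type*} [TopologicalSpace E] [Nonempty E] [CompactSpace E]
  [TopologicalSpace.MetrizableSpace E] [TotallyDisconnectedSpace E]

theorem glue_perm (F : Set E) (X : ℤ → Set E) (u u' : ℤ → E → E) (d : ℤ) {zp zm : E}
    (hXc : ∀ n, IsClopen (X n))
    (hd : ∀ m n, m ≠ n → Disjoint (X m) (X n))
    (hgood : ∀ n, IsGoodMap F (X n) (X (n+d)) (u n) (u' n))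
    (hne : zp ≠ zm) (hzp : ∀ n, zp ∉ X n) (hzm : ∀ n, zm ∉ X n)
    (hsXp : ∀ V, IsOpen V → zp ∈ V → ∃ N : ℤ, ∀ n ≥ N, X n ⊆ V)
    (hsXm : ∀ V, IsOpen V → zm ∈ V → ∃ N : ℤ, ∀ n ≤ N, X n ⊆ V) :
    ∃ π : Equiv.Perm E, π ∈ EndsHomeo F ∧
      (∀ n, ∀ x ∈ X n, π x = u n x) ∧ (∀ x, (∀ n, x ∉ X n) → π x = x) ∧
      (∀ n, ∀ y ∈ X (n+d), π.symm y = u' n y) ∧ (∀ y, (∀ n, y ∉ X n) → π.symm y = y) := by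
  set Y : ℤ → Set E := fun n => X (n+d) with hY
  have hdY : ∀ m n, m ≠ n → Disjoint (Y m) (Y n) := fun m n hmn => hd _ _ (by omega)
  have hYmem : ∀ x, (∀ n, x ∉ X n) → (∀ n, x ∉ Y n) := fun x hx n => hx (n+d)
  have hXmem : ∀ x, (∀ n, x ∉ Y n) → (∀ n, x ∉ X n) := by
    intro x hx n
    have := hx (n-d)
    simpa [hY, sub_add_cancel] using this
  have left_inv : ∀ x, glueFn Y u' (glueFn X u x) = x := by
    intro x
    by_cases hx : ∃ n, x ∈ X n
    · obtain ⟨n, hn⟩ := hx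
      rw [glueFn_mem hd hn]
      have h1 : u n x ∈ Y n := (hgood n).mapsTo hn
      rw [glueFn_mem hdY h1]
      exact (hgood n).left x hn
    · push_neg at hx
      rw [glueFn_not_mem hx, glueFn_not_mem (hYmem x hx)]
  have right_inv : ∀ y, glueFn X u (glueFn Y u' y) = y := by
    intro y
    by_cases hy : ∃ n, y ∈ Y n
    · obtain ⟨n, hn⟩ := hy
      rw [glueFn_mem hdY hn]
      have h1 : u' n y ∈ X n := (hgood n).mapsTo' hn
      rw [glueFn_mem hd h1]
      exact (hgood n).right y hn
    · push_neg at hy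
      rw [glueFn_not_mem hy, glueFn_not_mem (hXmem y hy)]
  set π : Equiv.Perm E := ⟨glueFn X u, glueFn Y u', left_inv, right_inv⟩ with hπ
  have hcont1 : Continuous (glueFn X u) := by
    apply glueFn_continuous X Y u hXc hd (fun n => (hgood n).mapsTo) (fun n => (hgood n).cont)
      hne hzp hzm hsXp hsXm
    · intro V hV hzV
      obtain ⟨N, hN⟩ := hsXp V hV hzV
      exact ⟨N - d, fun n hn => hN (n+d) (by omega)⟩
    · intro V hV hzV
      obtain ⟨N, hN⟩ := hsXm V hV hzV
      exact ⟨N - d, fun n hn => hN (n+d) (by omega)⟩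
  have hcont2 : Continuous (glueFn Y u') := by
    have hzpY : ∀ n, zp ∉ Y n := fun n => hzp (n+d)
    have hzmY : ∀ n, zm ∉ Y n := fun n => hzm (n+d)
    apply glueFn_continuous Y (fun n => X n) u' (fun n => hXc (n+d)) hdY
      (fun n => (hgood n).mapsTo') (fun n => (hgood n).cont') hne hzpY hzmY
    · intro V hV hzV
      obtain ⟨N, hN⟩ := hsXp V hV hzV
      exact ⟨N - d, fun n hn => hN (n+d) (by omega)⟩
    · intro V hV hzV
      obtain ⟨N, hN⟩ := hsXm V hV hzV
      exact ⟨N - d, fun n hn => hN (n+d) (by omega)⟩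
    · exact hsXp
    · exact hsXm
  refine ⟨π, ⟨hcont1, hcont2, ?_⟩, ?_, ?_, ?_, ?_⟩
  · intro x
    show glueFn X u x ∈ F ↔ x ∈ F
    by_cases hx : ∃ n, x ∈ X n
    · obtain ⟨n, hn⟩ := hx
      rw [glueFn_mem hd hn]
      exact (hgood n).mem_iff x hn
    · push_neg at hx
      rw [glueFn_not_mem hx]
  · intro n x hx
    exact glueFn_mem hd hx
  · intro x hx
    exact glueFn_not_mem hx
  · intro n y hy
    exact glueFn_mem hdY (show y ∈ Y n from hy)
  · intro y hy
    exact glueFn_not_mem (hYmem y hy)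

end GluePerm
section Pieces

open Set Topology Filter
open scoped Classical

set_option linter.unusedSectionVars false

variable {E : Type*} [TopologicalSpace E] [Nonempty E] [CompactSpace E]
  [TopologicalSpace.MetrizableSpace E] [TotallyDisconnectedSpace E]

private theorem piecewise2_continuous {A1 A2 : Set E} {f1 f2 : E → E}
    (hA1 : IsClopen A1) (hA2 : IsClopen A2) (hA12 : Disjoint A1 A2)
    (hf1 : ContinuousOn f1 A1) (hf2 : ContinuousOn f2 A2) :
    Continuous (fun x => if x ∈ A1 then f1 x else if x ∈ A2 then f2 x else x) := by
  rw [continuous_iff_continuousAt]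
  intro x
  by_cases h1 : x ∈ A1
  · apply (hf1.continuousAt (hA1.isOpen.mem_nhds h1)).congr
    apply Filter.eventuallyEq_of_mem (hA1.isOpen.mem_nhds h1)
    intro y hy
    simp [hy]
  · by_cases h2 : x ∈ A2
    · apply (hf2.continuousAt (hA2.isOpen.mem_nhds h2)).congr
      apply Filter.eventuallyEq_of_mem (hA2.isOpen.mem_nhds h2)
      intro y hy
      have : y ∉ A1 := fun hc => (hA12.le_bot ⟨hc, hy⟩)
      simp [hy, this]
    · have hopen : IsOpen ((A1 ∪ A2)ᶜ) := (hA1.union hA2).compl.isOpen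
      apply (continuousAt_id).congr
      apply Filter.eventuallyEq_of_mem (hopen.mem_nhds (by simp [h1, h2]))
      intro y hy
      simp only [Set.mem_compl_iff, Set.mem_union] at hy
      push_neg at hy
      simp [hy.1, hy.2, _root_.id]

theorem two_glue (F : Set E) {A1 A2 B1 B2 : Set E} {f1 f1' f2 f2' : E → E}
    (hA1 : IsClopen A1) (hA2 : IsClopen A2) (hB1 : IsClopen B1) (hB2 : IsClopen B2)
    (hA12 : Disjoint A1 A2) (hB12 : Disjoint B1 B2)
    (hg1 : IsGoodMap F A1 B1 f1 f1') (hg2 : IsGoodMap F A2 B2 f2 f2')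
    (hun : A1 ∪ A2 = B1 ∪ B2) :
    ∃ π : Equiv.Perm E, π ∈ EndsHomeo F ∧ (∀ x ∈ A1, π x = f1 x) ∧ (∀ x ∈ A2, π x = f2 x) ∧
      (∀ x, x ∉ A1 ∪ A2 → π x = x) ∧
      (∀ y ∈ B1, π.symm y = f1' y) ∧ (∀ y ∈ B2, π.symm y = f2' y) ∧
      (∀ y, y ∉ A1 ∪ A2 → π.symm y = y) := by
  set to_ : E → E := fun x => if x ∈ A1 then f1 x else if x ∈ A2 then f2 x else x with hto
  set inv_ : E → E := fun y => if y ∈ B1 then f1' y else if y ∈ B2 then f2' y else y with hinv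
  have hA2' : ∀ x ∈ A2, x ∉ A1 := fun x hx hc => hA12.le_bot ⟨hc, hx⟩
  have hB2' : ∀ y ∈ B2, y ∉ B1 := fun y hy hc => hB12.le_bot ⟨hc, hy⟩
  have hto1 : ∀ x ∈ A1, to_ x = f1 x := fun x hx => by simp [hto, hx]
  have hto2 : ∀ x ∈ A2, to_ x = f2 x := fun x hx => by simp [hto, hx, hA2' x hx]
  have hto0 : ∀ x, x ∉ A1 ∪ A2 → to_ x = x := fun x hx => by
    simp only [Set.mem_union] at hx
    push_neg at hx
    simp [hto, hx.1, hx.2]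
  have hinv1 : ∀ y ∈ B1, inv_ y = f1' y := fun y hy => by simp [hinv, hy]
  have hinv2 : ∀ y ∈ B2, inv_ y = f2' y := fun y hy => by simp [hinv, hy, hB2' y hy]
  have hinv0 : ∀ y, y ∉ B1 ∪ B2 → inv_ y = y := fun y hy => by
    simp only [Set.mem_union] at hy
    push_neg at hy
    simp [hinv, hy.1, hy.2]
  have left_inv : ∀ x, inv_ (to_ x) = x := by
    intro x
    by_cases h1 : x ∈ A1
    · rw [hto1 x h1, hinv1 _ (hg1.mapsTo h1)]
      exact hg1.left x h1
    · by_cases h2 : x ∈ A2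
      · rw [hto2 x h2]
        have hB : f2 x ∈ B2 := hg2.mapsTo h2
        simp only [hinv]
        rw [if_neg (hB2' _ hB), if_pos hB]
        exact hg2.left x h2
      · have hx : x ∉ A1 ∪ A2 := by simp [h1, h2]
        rw [hto0 x hx, hinv0 x (hun ▸ hx)]
  have right_inv : ∀ y, to_ (inv_ y) = y := by
    intro y
    by_cases h1 : y ∈ B1
    · rw [hinv1 y h1, hto1 _ (hg1.mapsTo' h1)]
      exact hg1.right y h1
    · by_cases h2 : y ∈ B2
      · rw [hinv2 y h2]
        have hA : f2' y ∈ A2 := hg2.mapsTo' h2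
        simp only [hto]
        rw [if_neg (hA2' _ hA), if_pos hA]
        exact hg2.right y h2
      · have hy : y ∉ B1 ∪ B2 := by simp [h1, h2]
        rw [hinv0 y hy, hto0 y (hun ▸ hy)]
  set π : Equiv.Perm E := ⟨to_, inv_, left_inv, right_inv⟩ with hπ
  refine ⟨π, ⟨?_, ?_, ?_⟩, hto1, hto2, hto0, hinv1, hinv2,
    fun y hy => hinv0 y (hun ▸ hy)⟩
  · exact piecewise2_continuous hA1 hA2 hA12 hg1.cont hg2.cont
  · exact piecewise2_continuous hB1 hB2 hB12 hg1.cont' hg2.cont'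
  · intro x
    show to_ x ∈ F ↔ x ∈ F
    by_cases h1 : x ∈ A1
    · rw [hto1 x h1]; exact hg1.mem_iff x h1
    · by_cases h2 : x ∈ A2
      · rw [hto2 x h2]; exact hg2.mem_iff x h2
      · rw [hto0 x (by simp [h1, h2])]

theorem sep_clopen [T1Space E] (x : E) (s : Set E) (hs : s.Finite) (hx : x ∉ s) :
    ∃ U, IsClopen U ∧ x ∈ U ∧ Disjoint U s := by
  obtain ⟨U, hUc, hxU, hU⟩ := compact_exists_isClopen_in_isOpen hs.isClosed.isOpen_compl hx
  exact ⟨U, hUc, hxU, Set.disjoint_left.2 fun y hyU hys => hU hyU hys⟩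

theorem copy_avoid {F : Set E} (huss : UniformlySelfSimilar F) {z : E} (hz : Vast F z)
    {W : Set E} (hW : IsClopen W) (hzW : z ∈ W) :
    ∃ C, IsClopen C ∧ C ⊆ W ∧ z ∉ C ∧ GPH F Set.univ C := by
  obtain ⟨C0, hC0c, hC0W, hC0⟩ := hz W hW hzW
  by_cases hzC0 : z ∈ C0
  · obtain ⟨w, w', hw⟩ := hC0
    have hMinf := maxSet_infinite huss
    obtain ⟨m, hmM, hm⟩ : ∃ m, m ∈ MaxSet F ∧ m ≠ w' z := by
      obtain ⟨m, hm⟩ := (hMinf.diff (Set.finite_singleton (w' z))).nonempty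
      exact ⟨m, hm.1, by simpa using hm.2⟩
    have hmv : Vast F m := maximal_vast huss hmM
    obtain ⟨Q, hQc, hmQ, hQ⟩ := sep_clopen m {w' z} (Set.finite_singleton _) (by simpa using hm)
    obtain ⟨C1, hC1c, hC1Q, hC1⟩ := hmv Q hQc hmQ
    refine ⟨w '' C1, hw.image_isClopen hC0c (Set.subset_univ _) hC1c,
      ?_, ?_, hC1.comp ⟨w, w', hw.restrict (Set.subset_univ _)⟩⟩
    · rintro y ⟨x, _, rfl⟩
      exact hC0W (hw.mapsTo (Set.mem_univ x))
    · rintro ⟨x, hx, hxz⟩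
      have : w' z = x := by rw [← hxz, hw.left x (Set.mem_univ x)]
      exact hQ.le_bot ⟨hC1Q (this ▸ hx), rfl⟩
  · exact ⟨C0, hC0c, hC0W, hzC0, hC0⟩

theorem copy_piece {F : Set E} (huss : UniformlySelfSimilar F) {z : E} (hz : Vast F z)
    {W : Set E} (hW : IsClopen W) (hzW : z ∈ W) (X : Set E) (hX : IsClopen X) :
    ∃ K, IsClopen K ∧ K ⊆ W ∧ z ∉ K ∧ GPH F X K := by
  obtain ⟨C, hCc, hCW, hzC, w, w', hw⟩ := copy_avoid huss hz hW hzW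
  refine ⟨w '' X, hw.image_isClopen hCc (Set.subset_univ _) hX, ?_, ?_,
    ⟨w, w', hw.restrict (Set.subset_univ _)⟩⟩
  · rintro y ⟨x, _, rfl⟩
    exact hCW (hw.mapsTo (Set.mem_univ x))
  · intro hc
    exact hzC (Set.image_subset_iff.2 (fun x _ => hw.mapsTo (Set.mem_univ x)) hc)

theorem chainAt {F : Set E} (huss : UniformlySelfSimilar F) {z : E} (hz : Vast F z)
    {O : Set E} (hO : IsClopen O) (hzO : z ∈ O) (X : Set E) (hX : IsClopen X) :
    ∃ K : ℕ → Set E, (∀ n, IsClopen (K n)) ∧ (∀ n, K n ⊆ O) ∧ (∀ n, z ∉ K n) ∧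
      (∀ m n, m ≠ n → Disjoint (K m) (K n)) ∧
      (∀ V, IsOpen V → z ∈ V → ∃ N : ℕ, ∀ n ≥ N, K n ⊆ V) ∧
      (∀ n, GPH F X (K n)) := by
  letI : MetricSpace E := TopologicalSpace.metrizableSpaceMetric E
  let T := {V : Set E // IsClopen V ∧ z ∈ V}
  have step : ∀ (p : T) (n : ℕ), {q : (Set E) × T // IsClopen q.1 ∧ q.1 ⊆ p.1 ∧ z ∉ q.1 ∧
      GPH F X q.1 ∧ q.2.1 ⊆ p.1 ∧ Disjoint q.1 q.2.1 ∧
      q.2.1 ⊆ Metric.ball z (1/(n+1)) } := by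
    intro p n
    obtain ⟨V, hVc, hzV⟩ := p
    have hK := copy_piece huss hz hVc hzV X hX
    set K := hK.choose with hKdef
    obtain ⟨hKc, hKV, hzK, hKgph⟩ := hK.choose_spec
    have hBex := compact_exists_isClopen_in_isOpen
      (Metric.isOpen_ball (x := z) (ε := 1/(n+1))) (Metric.mem_ball_self (by positivity))
    set B := hBex.choose with hBdef
    obtain ⟨hBc, hzB, hB⟩ := hBex.choose_spec
    refine ⟨⟨K, ⟨(V ∩ B) \ K, ((hVc.inter hBc).diff hKc), ⟨⟨hzV, hzB⟩, hzK⟩⟩⟩,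
      hKc, hKV, hzK, hKgph, ?_, ?_, ?_⟩
    · exact fun x hx => hx.1.1
    · exact Set.disjoint_left.2 fun x hxK hx => hx.2 hxK
    · exact fun x hx => hB hx.1.2
  let seq : ℕ → (Set E) × T := fun n => Nat.rec (⟨∅, ⟨O, hO, hzO⟩⟩ : (Set E) × T)
    (fun n p => (step p.2 n).1) n
  set K : ℕ → Set E := fun n => (seq (n+1)).1 with hKs
  set V : ℕ → Set E := fun n => (seq n).2.1 with hVs
  have hspec : ∀ n, IsClopen (K n) ∧ K n ⊆ V n ∧ z ∉ K n ∧ GPH F X (K n) ∧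
      V (n+1) ⊆ V n ∧ Disjoint (K n) (V (n+1)) ∧ V (n+1) ⊆ Metric.ball z (1/(n+1)) :=
    fun n => (step (seq n).2 n).2
  have hVmono : ∀ m n, n ≤ m → V m ⊆ V n := by
    intro m n h
    induction m with
    | zero => rw [Nat.le_zero.1 h]
    | succ k ih =>
      rcases Nat.lt_or_ge n (k+1) with h' | h'
      · exact ((hspec k).2.2.2.2.1).trans (ih (by omega))
      · rw [le_antisymm h h']
  refine ⟨K, fun n => (hspec n).1, ?_, fun n => (hspec n).2.2.1, ?_, ?_, fun n => (hspec n).2.2.2.1⟩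
  · intro n
    exact ((hspec n).2.1).trans (hVmono n 0 (Nat.zero_le n))
  · intro m n hmn
    rcases Ne.lt_or_gt hmn with h | h
    · exact Set.disjoint_left.2 fun x hxm hxn =>
        ((hspec m).2.2.2.2.2.1).le_bot ⟨hxm, hVmono n (m+1) h ((hspec n).2.1 hxn)⟩
    · exact Set.disjoint_left.2 fun x hxm hxn =>
        ((hspec n).2.2.2.2.2.1).le_bot ⟨hxn, hVmono m (n+1) h ((hspec m).2.1 hxm)⟩
  · intro W hW hzW
    obtain ⟨ε, hε, hball⟩ := Metric.isOpen_iff.1 hW z hzW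
    obtain ⟨N, hN⟩ := exists_nat_gt (1/ε)
    refine ⟨N+1, fun n hn => ?_⟩
    have h1 : K n ⊆ V n := (hspec n).2.1
    have h2 : V n ⊆ V (N+1) := hVmono n (N+1) hn
    have h3 : V (N+1) ⊆ Metric.ball z (1/(N+1)) := (hspec N).2.2.2.2.2.2
    refine (h1.trans (h2.trans h3)).trans ?_
    apply (Metric.ball_subset_ball ?_).trans hball
    rw [div_le_iff₀ (by positivity)]
    rw [div_lt_iff₀ hε] at hN
    nlinarith [hε.le]
end Pieces
section Swindle

open Set Topology Filter
open scoped Classical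

set_option linter.unusedSectionVars false
set_option maxHeartbeats 1000000

variable {E : Type*} [TopologicalSpace E] [Nonempty E] [CompactSpace E]
  [TopologicalSpace.MetrizableSpace E] [TotallyDisconnectedSpace E]

theorem supported_perm_goodmap {F X : Set E} {h : Equiv.Perm E} (hmem : h ∈ EndsHomeo F)
    (hsupp : ∀ x ∉ X, h x = x) : IsGoodMap F X X ⇑h ⇑h.symm where
  mapsTo := by
    intro x hx
    by_contra hc
    have h1 : h (h x) = h x := hsupp (h x) hc
    have h2 : h x = x := h.injective h1
    exact hc (by rw [h2]; exact hx)
  mapsTo' := by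
    intro y hy
    by_contra hc
    have h1 : h (h.symm y) = h.symm y := hsupp (h.symm y) hc
    rw [h.apply_symm_apply] at h1
    exact hc (by rw [← h1]; exact hy)
  left := fun x _ => h.symm_apply_apply x
  right := fun y _ => h.apply_symm_apply y
  cont := hmem.1.continuousOn
  cont' := hmem.2.1.continuousOn
  mem_iff := fun x _ => hmem.2.2 x

theorem swindle {F : Set E} (huss : UniformlySelfSimilar F) {X : Set E} (hX : IsClopen X)
    {p q : E} (hpv : Vast F p) (hqv : Vast F q) (hpq : p ≠ q) (hpX : p ∉ X) (hqX : q ∉ X)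
    {h : Equiv.Perm E} (hmem : h ∈ EndsHomeo F) (hsupp : ∀ x ∉ X, h x = x) :
    ∃ a t : Equiv.Perm E, a ∈ EndsHomeo F ∧ t ∈ EndsHomeo F ∧ h = a * t * a⁻¹ * t⁻¹ := by
  -- disjoint clopen zones around p and q, away from X
  have hXq : IsClosed (X ∪ {q}) := hX.isClosed.union isClosed_singleton
  obtain ⟨Op, hOpc, hpOp, hOp⟩ := compact_exists_isClopen_in_isOpen (x := p) hXq.isOpen_compl
    (by simp only [Set.mem_compl_iff, Set.mem_union, Set.mem_singleton_iff]; tauto)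
  have hqOp : q ∉ Op := fun hc => (hOp hc) (Or.inr rfl)
  have hXOp : IsClosed (X ∪ Op) := hX.isClosed.union hOpc.isClosed
  obtain ⟨Om, hOmc, hqOm, hOm⟩ := compact_exists_isClopen_in_isOpen (x := q) hXOp.isOpen_compl
    (by simp only [Set.mem_compl_iff, Set.mem_union]; tauto)
  -- chains of copies of X converging to p and q
  obtain ⟨Kp, hKpc, hKpO, hpKp, hKpd, hKps, hKpg⟩ := chainAt huss hpv hOpc hpOp X hX
  obtain ⟨Km, hKmc, hKmO, hqKm, hKmd, hKms, hKmg⟩ := chainAt huss hqv hOmc hqOm X hX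
  have hKpX : ∀ n, Disjoint (Kp n) X :=
    fun n => Set.disjoint_left.2 fun x hx hxX => (hOp (hKpO n hx)) (Or.inl hxX)
  have hKmX : ∀ n, Disjoint (Km n) X :=
    fun n => Set.disjoint_left.2 fun x hx hxX => (hOm (hKmO n hx)) (Or.inl hxX)
  have hKpKm : ∀ m n, Disjoint (Kp m) (Km n) :=
    fun m n => Set.disjoint_left.2 fun x hx hx' => (hOm (hKmO n hx')) (Or.inr (hKpO m hx))
  -- the bi-infinite chain
  set P : ℤ → Set E := fun n => if 0 < n then Kp (n-1).toNat else if n < 0 then Km (-n-1).toNat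
    else X with hP
  have hP0 : P 0 = X := by simp [hP]
  have hPpos : ∀ n : ℤ, 0 < n → P n = Kp (n-1).toNat := fun n hn => by
    simp only [hP]; rw [if_pos hn]
  have hPneg : ∀ n : ℤ, n < 0 → P n = Km (-n-1).toNat := fun n hn => by
    simp only [hP]; rw [if_neg (by omega), if_pos hn]
  have hPc : ∀ n, IsClopen (P n) := by
    intro n
    rcases lt_trichotomy 0 n with hn | hn | hn
    · rw [hPpos n hn]; exact hKpc _
    · rw [← hn, hP0]; exact hX
    · rw [hPneg n hn]; exact hKmc _
  have hPd : ∀ m n : ℤ, m ≠ n → Disjoint (P m) (P n) := by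
    have base : ∀ m n : ℤ, m < n → Disjoint (P m) (P n) := by
      intro m n hmn
      rcases lt_trichotomy 0 m with hm | hm | hm
      · have hn : 0 < n := by omega
        rw [hPpos m hm, hPpos n hn]
        exact hKpd _ _ (by omega)
      · rw [← hm, hP0, hPpos n (by omega)]
        exact (hKpX _).symm
      · rcases lt_trichotomy 0 n with hn | hn | hn
        · rw [hPneg m hm, hPpos n hn]
          exact ((hKpKm _ _)).symm
        · rw [← hn, hP0, hPneg m hm]
          exact (hKmX _)
        · rw [hPneg m hm, hPneg n hn]
          exact hKmd _ _ (by omega)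
    intro m n hmn
    rcases Ne.lt_or_gt hmn with hlt | hlt
    · exact base m n hlt
    · exact (base n m hlt).symm
  have hpP : ∀ n, p ∉ P n := by
    intro n
    rcases lt_trichotomy 0 n with hn | hn | hn
    · rw [hPpos n hn]; exact hpKp _
    · rw [← hn, hP0]; exact hpX
    · rw [hPneg n hn]
      intro hc
      exact (hOm (hKmO _ hc)) (Or.inr hpOp)
  have hqP : ∀ n, q ∉ P n := by
    intro n
    rcases lt_trichotomy 0 n with hn | hn | hn
    · rw [hPpos n hn]
      intro hc
      exact hqOp (hKpO _ hc)
    · rw [← hn, hP0]; exact hqX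
    · rw [hPneg n hn]; exact hqKm _
  have hsp : ∀ V, IsOpen V → p ∈ V → ∃ N : ℤ, ∀ n ≥ N, P n ⊆ V := by
    intro V hV hpV
    obtain ⟨N0, hN0⟩ := hKps V hV hpV
    refine ⟨N0 + 1, fun n hn => ?_⟩
    rw [hPpos n (by omega)]
    exact hN0 _ (by omega)
  have hsm : ∀ V, IsOpen V → q ∈ V → ∃ N : ℤ, ∀ n ≤ N, P n ⊆ V := by
    intro V hV hqV
    obtain ⟨N0, hN0⟩ := hKms V hV hqV
    refine ⟨-(N0 + 1), fun n hn => ?_⟩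
    rw [hPneg n (by omega)]
    exact hN0 _ (by omega)
  -- good maps from X to the pieces
  have hex : ∀ n : ℤ, n ≠ 0 → GPH F X (P n) := by
    intro n hn
    rcases lt_trichotomy 0 n with hn' | hn' | hn'
    · rw [hPpos n hn']; exact hKpg _
    · exact absurd hn'.symm hn
    · rw [hPneg n hn']; exact hKmg _
  set v : ℤ → E → E := fun n => if hn : n = 0 then _root_.id else (hex n hn).choose with hvdef
  set v' : ℤ → E → E := fun n => if hn : n = 0 then _root_.id
    else (hex n hn).choose_spec.choose with hv'def
  have hv : ∀ n, IsGoodMap F X (P n) (v n) (v' n) := by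
    intro n
    by_cases hn : n = 0
    · subst hn
      simp only [hvdef, hv'def, dif_pos]
      rw [hP0]
      exact IsGoodMap.id F X
    · simp only [hvdef, hv'def, dif_neg hn]
      exact (hex n hn).choose_spec.choose_spec
  have hv0 : v 0 = _root_.id := by simp [hvdef]
  have hv0' : v' 0 = _root_.id := by simp [hv'def]
  have hhgood : IsGoodMap F X X ⇑h ⇑h.symm := supported_perm_goodmap hmem hsupp
  -- the translation t
  obtain ⟨t, htmem, hton, htout, htson, htsout⟩ := glue_perm F P
    (fun n => v (n+1) ∘ v' n) (fun n => v n ∘ v' (n+1)) 1 hPc hPd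
    (fun n => (hv n).symm.comp (hv (n+1))) hpq hpP hqP hsp hsm
  -- the infinite product a
  obtain ⟨a, hamem, haon, haout, hason, hasout⟩ := glue_perm F P
    (fun n => if 0 ≤ n then v n ∘ ⇑h ∘ v' n else _root_.id)
    (fun n => if 0 ≤ n then v n ∘ ⇑h.symm ∘ v' n else _root_.id) 0 hPc hPd
    (fun n => by
      simp only [add_zero]
      by_cases hn : 0 ≤ n
      · simp only [if_pos hn]
        exact ((hv n).symm.comp hhgood).comp (hv n)
      · simp only [if_neg hn]
        exact IsGoodMap.id F (P n))
    hpq hpP hqP hsp hsm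
  refine ⟨a, t, hamem, htmem, ?_⟩
  apply Equiv.ext
  intro x
  have hmul : (a * t * a⁻¹ * t⁻¹) x = a (t (a.symm (t.symm x))) := rfl
  rw [hmul]
  by_cases hx : ∃ n, x ∈ P n
  · obtain ⟨n, hxn⟩ := hx
    have hxX : v' n x ∈ X := (hv n).mapsTo' hxn
    have e1 : n - 1 + 1 = n := by omega
    -- t.symm x = v (n-1) (v' n x)
    have s1 : t.symm x = v (n-1) (v' n x) := by
      have := htson (n-1) x (by rw [e1]; exact hxn)
      rw [this]
      simp only [Function.comp_apply]
      rw [e1]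
    have hy1 : v (n-1) (v' n x) ∈ P (n-1) := (hv (n-1)).mapsTo hxX
    rcases lt_trichotomy 0 n with hn | hn | hn
    · -- n ≥ 1
      have hn1 : (0:ℤ) ≤ n - 1 := by omega
      have s2 : a.symm (v (n-1) (v' n x)) = v (n-1) (h.symm (v' n x)) := by
        have := hason (n-1) _ (by rw [add_zero]; exact hy1)
        rw [this]
        simp only [if_pos hn1, Function.comp_apply]
        rw [(hv (n-1)).left _ hxX]
      have hy2 : v (n-1) (h.symm (v' n x)) ∈ P (n-1) := (hv (n-1)).mapsTo (hhgood.mapsTo' hxX)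
      have hy2X : h.symm (v' n x) ∈ X := hhgood.mapsTo' hxX
      have s3 : t (v (n-1) (h.symm (v' n x))) = v n (h.symm (v' n x)) := by
        have := hton (n-1) _ hy2
        rw [this]
        simp only [Function.comp_apply]
        rw [(hv (n-1)).left _ hy2X, e1]
      have hy3 : v n (h.symm (v' n x)) ∈ P n := (hv n).mapsTo hy2X
      have s4 : a (v n (h.symm (v' n x))) = x := by
        have := haon n _ hy3
        rw [this]
        simp only [if_pos (le_of_lt hn), Function.comp_apply]
        rw [(hv n).left _ hy2X, h.apply_symm_apply, (hv n).right x hxn]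
      rw [s1, s2, s3, s4]
      have hxnotX : x ∉ X := by
        intro hc
        exact (hPd n 0 (by omega)).le_bot ⟨hxn, by rwa [hP0]⟩
      exact hsupp x hxnotX
    · -- n = 0
      subst hn
      rw [hP0] at hxn
      simp only [hv0', id_eq] at s1 hy1
      have s2 : a.symm (v (0-1) x) = v (0-1) x := by
        have := hason (0-1) _ (by rw [add_zero]; exact hy1)
        rw [this]
        norm_num
      have s3 : t (v (0-1) x) = x := by
        have := hton (0-1) _ hy1
        rw [this]
        simp only [Function.comp_apply]
        have hl : v' (0-1) (v (0-1) x) = x := by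
          have := (hv (0-1)).left x (by rwa [hv0', id_eq] at hxX)
          simpa using this
        rw [hl]
        norm_num
        rw [hv0]
        rfl
      have s4 : a x = h x := by
        have := haon 0 x (by rwa [hP0])
        rw [this]
        simp only [if_pos (le_refl (0:ℤ)), Function.comp_apply, hv0, hv0', id_eq]
      rw [s1, s2, s3, s4]
    · -- n ≤ -1
      have hn1 : ¬ (0:ℤ) ≤ n - 1 := by omega
      have s2 : a.symm (v (n-1) (v' n x)) = v (n-1) (v' n x) := by
        have := hason (n-1) _ (by rw [add_zero]; exact hy1)
        rw [this]
        simp only [if_neg hn1]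
        rfl
      have s3 : t (v (n-1) (v' n x)) = x := by
        have := hton (n-1) _ hy1
        rw [this]
        simp only [Function.comp_apply]
        rw [(hv (n-1)).left _ hxX, e1, (hv n).right x hxn]
      have s4 : a x = x := by
        have := haon n x hxn
        rw [this]
        simp only [if_neg (by omega : ¬ (0:ℤ) ≤ n)]
        rfl
      rw [s1, s2, s3, s4]
      have hxnotX : x ∉ X := by
        intro hc
        exact (hPd n 0 (by omega)).le_bot ⟨hxn, by rwa [hP0]⟩
      exact hsupp x hxnotX
  · push_neg at hx
    rw [htsout x hx, hasout x hx, htout x hx, haout x hx]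
    exact hsupp x (fun hc => hx 0 (by rwa [hP0]))

end Swindle
section Absorb

open Set Topology Filter
open scoped Classical

set_option linter.unusedSectionVars false
set_option maxHeartbeats 1000000

variable {E : Type*} [TopologicalSpace E] [Nonempty E] [CompactSpace E]
  [TopologicalSpace.MetrizableSpace E] [TotallyDisconnectedSpace E]

/-- Absorption: the whole space is pair-equivalent to the complement of a clopen set
that avoids two vast points. -/
theorem absorb {F : Set E} (huss : UniformlySelfSimilar F) {X : Set E} (hX : IsClopen X)
    {p q : E} (hpv : Vast F p) (hqv : Vast F q) (hpq : p ≠ q) (hpX : p ∉ X) (hqX : q ∉ X) :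
    GPH F Set.univ Xᶜ := by
  have hXq : IsClosed (X ∪ {q}) := hX.isClosed.union isClosed_singleton
  obtain ⟨O, hOc, hpO, hO⟩ := compact_exists_isClopen_in_isOpen (x := p) hXq.isOpen_compl
    (by simp only [Set.mem_compl_iff, Set.mem_union, Set.mem_singleton_iff]; tauto)
  obtain ⟨K, hKc, hKO, hpK, hKd, hKs, hKg⟩ := chainAt huss hpv hOc hpO X hX
  have hKX : ∀ n, Disjoint (K n) X :=
    fun n => Set.disjoint_left.2 fun x hx hxX => (hO (hKO n hx)) (Or.inl hxX)
  have hqK : ∀ n, q ∉ K n := fun n hc => (hO (hKO n hc)) (Or.inr rfl)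
  set P : ℤ → Set E := fun n => if 0 < n then K (n-1).toNat else if n = 0 then X else ∅ with hPdef
  set R : ℤ → Set E := fun n => if 0 < n then K (n-1).toNat else ∅ with hRdef
  have hP0 : P 0 = X := by simp [hPdef]
  have hPpos : ∀ n : ℤ, 0 < n → P n = K (n-1).toNat := fun n hn => by
    simp only [hPdef]; rw [if_pos hn]
  have hPneg : ∀ n : ℤ, n < 0 → P n = ∅ := fun n hn => by
    simp only [hPdef]; rw [if_neg (by omega), if_neg (by omega)]
  have hRpos : ∀ n : ℤ, 0 < n → R n = P n := fun n hn => by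
    simp only [hPdef, hRdef]; rw [if_pos hn, if_pos hn]
  have hRnonpos : ∀ n : ℤ, n ≤ 0 → R n = ∅ := fun n hn => by
    simp only [hRdef]; rw [if_neg (by omega)]
  have hPc : ∀ n, IsClopen (P n) := by
    intro n
    rcases lt_trichotomy 0 n with hn | hn | hn
    · rw [hPpos n hn]; exact hKc _
    · rw [← hn, hP0]; exact hX
    · rw [hPneg n hn]; exact isClopen_empty
  have hRc : ∀ n, IsClopen (R n) := by
    intro n
    rcases le_or_gt n 0 with hn | hn
    · rw [hRnonpos n hn]; exact isClopen_empty
    · rw [hRpos n hn, hPpos n hn]; exact hKc _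
  have hPd : ∀ m n : ℤ, m ≠ n → Disjoint (P m) (P n) := by
    have base : ∀ m n : ℤ, m < n → Disjoint (P m) (P n) := by
      intro m n hmn
      rcases lt_trichotomy 0 m with hm | hm | hm
      · rw [hPpos m hm, hPpos n (by omega)]
        exact hKd _ _ (by omega)
      · rw [← hm, hP0, hPpos n (by omega)]
        exact (hKX _).symm
      · rw [hPneg m hm]
        exact Set.disjoint_left.2 fun x hx => absurd hx (Set.notMem_empty x)
    intro m n hmn
    rcases Ne.lt_or_gt hmn with hlt | hlt
    · exact base m n hlt
    · exact (base n m hlt).symm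
  have hRd : ∀ m n : ℤ, m ≠ n → Disjoint (R m) (R n) := by
    intro m n hmn
    rcases le_or_gt m 0 with hm | hm
    · rw [hRnonpos m hm]
      exact Set.disjoint_left.2 fun x hx => absurd hx (Set.notMem_empty x)
    · rcases le_or_gt n 0 with hn | hn
      · rw [hRnonpos n hn]
        exact Set.disjoint_right.2 fun x hx => absurd hx (Set.notMem_empty x)
      · rw [hRpos m hm, hRpos n hn]
        exact hPd m n hmn
  have hpP : ∀ n, p ∉ P n := by
    intro n
    rcases lt_trichotomy 0 n with hn | hn | hn
    · rw [hPpos n hn]; exact hpK _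
    · rw [← hn, hP0]; exact hpX
    · rw [hPneg n hn]; exact Set.notMem_empty p
  have hqP : ∀ n, q ∉ P n := by
    intro n
    rcases lt_trichotomy 0 n with hn | hn | hn
    · rw [hPpos n hn]; exact hqK _
    · rw [← hn, hP0]; exact hqX
    · rw [hPneg n hn]; exact Set.notMem_empty q
  have hpR : ∀ n, p ∉ R n := by
    intro n
    rcases le_or_gt n 0 with hn | hn
    · rw [hRnonpos n hn]; exact Set.notMem_empty p
    · rw [hRpos n hn]; exact hpP n
  have hqR : ∀ n, q ∉ R n := by
    intro n
    rcases le_or_gt n 0 with hn | hn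
    · rw [hRnonpos n hn]; exact Set.notMem_empty q
    · rw [hRpos n hn]; exact hqP n
  have hsPp : ∀ V, IsOpen V → p ∈ V → ∃ N : ℤ, ∀ n ≥ N, P n ⊆ V := by
    intro V hV hpV
    obtain ⟨N0, hN0⟩ := hKs V hV hpV
    refine ⟨N0 + 1, fun n hn => ?_⟩
    rw [hPpos n (by omega)]
    exact hN0 _ (by omega)
  have hsPm : ∀ V, IsOpen V → q ∈ V → ∃ N : ℤ, ∀ n ≤ N, P n ⊆ V := by
    intro V _ _
    exact ⟨-1, fun n hn => by rw [hPneg n (by omega)]; exact Set.empty_subset V⟩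
  have hsRp : ∀ V, IsOpen V → p ∈ V → ∃ N : ℤ, ∀ n ≥ N, R n ⊆ V := by
    intro V hV hpV
    obtain ⟨N, hN⟩ := hsPp V hV hpV
    refine ⟨max N 1, fun n hn => ?_⟩
    rw [hRpos n (by omega)]
    exact hN n (by omega)
  have hsRm : ∀ V, IsOpen V → q ∈ V → ∃ N : ℤ, ∀ n ≤ N, R n ⊆ V := by
    intro V _ _
    exact ⟨-1, fun n hn => by rw [hRnonpos n (by omega)]; exact Set.empty_subset V⟩
  -- good maps from X onto the pieces
  have hex : ∀ n : ℤ, 0 < n → GPH F X (P n) := by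
    intro n hn
    rw [hPpos n hn]; exact hKg _
  set v : ℤ → E → E := fun n => if hn : 0 < n then (hex n hn).choose else _root_.id with hvdef
  set v' : ℤ → E → E := fun n => if hn : 0 < n then (hex n hn).choose_spec.choose else _root_.id
    with hv'def
  have hv : ∀ n : ℤ, 0 ≤ n → IsGoodMap F X (P n) (v n) (v' n) := by
    intro n hn
    rcases lt_or_eq_of_le hn with hn' | hn'
    · simp only [hvdef, hv'def, dif_pos hn']
      exact (hex n hn').choose_spec.choose_spec
    · rw [← hn']
      simp only [hvdef, hv'def, dif_neg (lt_irrefl (0:ℤ))]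
      rw [← hn'] at hn' ⊢
      rw [hP0]
      exact IsGoodMap.id F X
  set fp : ℤ → E → E := fun n => v (n+1) ∘ v' n with hfpdef
  set bq : ℤ → E → E := fun n => v (n-1) ∘ v' n with hbqdef
  set f : E → E := glueFn P fp with hfdef
  set f' : E → E := glueFn R bq with hf'def
  have hfmem : ∀ n : ℤ, 0 ≤ n → ∀ x ∈ P n, f x = v (n+1) (v' n x) := by
    intro n hn x hx
    rw [hfdef, glueFn_mem hPd hx]
    rfl
  have hfout : ∀ x, (∀ n, x ∉ P n) → f x = x := fun x hx => glueFn_not_mem hx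
  have hf'mem : ∀ n : ℤ, 0 < n → ∀ y ∈ P n, f' y = v (n-1) (v' n y) := by
    intro n hn y hy
    rw [hf'def, glueFn_mem hRd (by rw [hRpos n hn]; exact hy)]
    rfl
  have hf'out : ∀ y, (∀ n, y ∉ R n) → f' y = y := fun y hy => glueFn_not_mem hy
  have hnotP : ∀ x, (∀ n, x ∉ P n) → (∀ n, x ∉ R n) := by
    intro x hx n
    rcases le_or_gt n 0 with hn | hn
    · rw [hRnonpos n hn]; exact Set.notMem_empty x
    · rw [hRpos n hn]; exact hx n
  refine ⟨f, f', ?_, ?_, ?_, ?_, ?_, ?_, ?_⟩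
  · -- mapsTo
    intro x _
    by_cases hx : ∃ n, x ∈ P n
    · obtain ⟨n, hn⟩ := hx
      have hn0 : 0 ≤ n := by
        by_contra hc
        rw [hPneg n (by omega)] at hn
        exact Set.notMem_empty x hn
      rw [hfmem n hn0 x hn]
      have : v (n+1) (v' n x) ∈ P (n+1) := (hv (n+1) (by omega)).mapsTo ((hv n hn0).mapsTo' hn)
      rw [hPpos (n+1) (by omega)] at this
      exact fun hc => (hO (hKO _ this)) (Or.inl hc)
    · push_neg at hx
      rw [hfout x hx]
      exact fun hc => hx 0 (by rwa [hP0])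
  · -- mapsTo'
    exact fun y _ => Set.mem_univ _
  · -- left inverse
    intro x _
    by_cases hx : ∃ n, x ∈ P n
    · obtain ⟨n, hn⟩ := hx
      have hn0 : 0 ≤ n := by
        by_contra hc
        rw [hPneg n (by omega)] at hn
        exact Set.notMem_empty x hn
      rw [hfmem n hn0 x hn]
      have hXm : v' n x ∈ X := (hv n hn0).mapsTo' hn
      have hmem1 : v (n+1) (v' n x) ∈ P (n+1) := (hv (n+1) (by omega)).mapsTo hXm
      rw [hf'mem (n+1) (by omega) _ hmem1]
      have e1 : n + 1 - 1 = n := by omega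
      rw [(hv (n+1) (by omega)).left _ hXm, e1]
      exact (hv n hn0).right x hn
    · push_neg at hx
      rw [hfout x hx, hf'out x (hnotP x hx)]
  · -- right inverse
    intro y hy
    by_cases hyR : ∃ n, y ∈ R n
    · obtain ⟨n, hn⟩ := hyR
      have hn0 : 0 < n := by
        by_contra hc
        rw [hRnonpos n (by omega)] at hn
        exact Set.notMem_empty y hn
      rw [hRpos n hn0] at hn
      rw [hf'mem n hn0 y hn]
      have hXm : v' n y ∈ X := (hv n (by omega)).mapsTo' hn
      have hmem1 : v (n-1) (v' n y) ∈ P (n-1) := (hv (n-1) (by omega)).mapsTo hXm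
      rw [hfmem (n-1) (by omega) _ hmem1]
      have e1 : n - 1 + 1 = n := by omega
      rw [(hv (n-1) (by omega)).left _ hXm, e1]
      exact (hv n (by omega)).right y hn
    · push_neg at hyR
      rw [hf'out y hyR, hfout y ?_]
      intro n hc
      rcases lt_trichotomy 0 n with hn | hn | hn
      · exact hyR n (by rwa [hRpos n hn])
      · rw [← hn, hP0] at hc
        exact hy hc
      · rw [hPneg n hn] at hc
        exact Set.notMem_empty y hc
  · -- continuity of f
    apply ContinuousOn.mono ?_ (Set.subset_univ _)
    apply Continuous.continuousOn
    apply glueFn_continuous P (fun n => P (n+1)) fp hPc hPd ?_ ?_ hpq hpP hqP hsPp hsPm ?_ ?_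
    · intro n
      rcases le_or_gt 0 n with hn | hn
      · intro x hx
        exact (hv (n+1) (by omega)).mapsTo ((hv n hn).mapsTo' hx)
      · rw [hPneg n hn]
        exact fun x hx => absurd hx (Set.notMem_empty x)
    · intro n
      rcases le_or_gt 0 n with hn | hn
      · exact ((hv n hn).symm.comp (hv (n+1) (by omega))).cont
      · rw [hPneg n hn]
        exact continuousOn_empty _
    · intro V hV hpV
      obtain ⟨N, hN⟩ := hsPp V hV hpV
      exact ⟨N - 1, fun n hn => hN (n+1) (by omega)⟩
    · intro V _ _
      exact ⟨-2, fun n hn => by show P (n+1) ⊆ V; rw [hPneg (n+1) (by omega)]; exact Set.empty_subset V⟩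
  · -- continuity of f'
    apply ContinuousOn.mono ?_ (Set.subset_univ Xᶜ)
    apply Continuous.continuousOn
    apply glueFn_continuous R (fun n => P (n-1)) bq hRc hRd ?_ ?_ hpq hpR hqR hsRp hsRm ?_ ?_
    · intro n
      rcases le_or_gt n 0 with hn | hn
      · rw [hRnonpos n hn]
        exact fun x hx => absurd hx (Set.notMem_empty x)
      · rw [hRpos n hn]
        intro y hy
        exact (hv (n-1) (by omega)).mapsTo ((hv n (by omega)).mapsTo' hy)
    · intro n
      rcases le_or_gt n 0 with hn | hn
      · rw [hRnonpos n hn]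
        exact continuousOn_empty _
      · rw [hRpos n hn]
        exact ((hv n (by omega)).symm.comp (hv (n-1) (by omega))).cont
    · intro V hV hpV
      obtain ⟨N, hN⟩ := hsPp V hV hpV
      exact ⟨N + 1, fun n hn => hN (n-1) (by omega)⟩
    · intro V _ _
      exact ⟨0, fun n hn => by show P (n-1) ⊆ V; rw [hPneg (n-1) (by omega)]; exact Set.empty_subset V⟩
  · -- membership in F is preserved
    intro x _
    by_cases hx : ∃ n, x ∈ P n
    · obtain ⟨n, hn⟩ := hx
      have hn0 : 0 ≤ n := by
        by_contra hc
        rw [hPneg n (by omega)] at hn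
        exact Set.notMem_empty x hn
      rw [hfmem n hn0 x hn]
      have hXm : v' n x ∈ X := (hv n hn0).mapsTo' hn
      have h1 := (hv (n+1) (by omega)).mem_iff _ hXm
      have h2 := (hv n hn0).symm.mem_iff x hn
      exact h1.trans h2
    · push_neg at hx
      rw [hfout x hx]
end Absorb

variable {E : Type*} [TopologicalSpace E] [Nonempty E] [CompactSpace E]
  [TopologicalSpace.MetrizableSpace E] [TotallyDisconnectedSpace E]
open Set Topology in
theorem endsHomeo_uniformly_perfect
    (F : Set E) (hF : IsClosed F) (huss : UniformlySelfSimilar F) :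
    ∀ g : ↥(EndsHomeo F), ∃ l : List ↥(EndsHomeo F), l.length ≤ 3 ∧
      (∀ c ∈ l, ∃ a b : ↥(EndsHomeo F), c = a * b * a⁻¹ * b⁻¹) ∧ l.prod = g := by
  intro gS
  obtain ⟨g, hg⟩ := gS
  classical
  have hgC := mem_endsHomeo_iff.1 hg
  have hMinf := maxSet_infinite huss
  -- choose plenty of distinct maximal (hence vast) points
  obtain ⟨p1, hp1⟩ := hMinf.nonempty
  obtain ⟨p2, hp2⟩ := (hMinf.diff (Set.finite_singleton p1)).nonempty
  obtain ⟨p3, hp3⟩ := (hMinf.diff ((Set.finite_singleton p1).insert p2)).nonempty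
  set T : Set E := {p1, p2, p3, g.symm p1, g.symm p2, g.symm p3} with hT
  have hTfin : T.Finite := Set.toFinite T
  obtain ⟨m1, hm1⟩ := (hMinf.diff hTfin).nonempty
  obtain ⟨m2, hm2⟩ := (hMinf.diff (hTfin.insert m1)).nonempty
  have hp1v : Vast F p1 := maximal_vast huss hp1
  have hp2v : Vast F p2 := maximal_vast huss hp2.1
  have hp3v : Vast F p3 := maximal_vast huss hp3.1
  have hm1v : Vast F m1 := maximal_vast huss hm1.1
  have hm2v : Vast F m2 := maximal_vast huss hm2.1
  have hp12 : p1 ≠ p2 := fun hc => hp2.2 (by rw [← hc]; exact rfl)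
  have hm12 : m1 ≠ m2 := fun hc => hm2.2 (by rw [← hc]; exact Set.mem_insert m1 T)
  -- the clopen set A around m1, m2, avoiding T
  obtain ⟨U1, hU1c, hm1U1, hU1T⟩ := sep_clopen m1 T hTfin hm1.2
  obtain ⟨U2, hU2c, hm2U2, hU2T⟩ := sep_clopen m2 T hTfin
    (fun hc => hm2.2 (Set.mem_insert_of_mem m1 hc))
  set A : Set E := U1 ∪ U2 with hAdef
  have hAc : IsClopen A := hU1c.union hU2c
  have hm1A : m1 ∈ A := Or.inl hm1U1
  have hm2A : m2 ∈ A := Or.inr hm2U2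
  have hAT : Disjoint A T := Set.disjoint_union_left.2 ⟨hU1T, hU2T⟩
  have hTnotA : ∀ x ∈ T, x ∉ A := fun x hxT hxA => hAT.le_bot ⟨hxA, hxT⟩
  set gA : Set E := ⇑g '' A with hgAdef
  have hgAc : IsClopen gA := by
    rw [hgAdef, Equiv.image_eq_preimage_symm]
    exact hAc.preimage hgC.2.1
  have hmem_gA : ∀ y, y ∈ gA ↔ g.symm y ∈ A := by
    intro y
    rw [hgAdef, Equiv.image_eq_preimage_symm]
    rfl
  have hp1T : p1 ∈ T := by simp [hT]
  have hp2T : p2 ∈ T := by simp [hT]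
  have hp3T : p3 ∈ T := by simp [hT]
  have hgp1T : g.symm p1 ∈ T := by simp [hT]
  have hgp2T : g.symm p2 ∈ T := by simp [hT]
  have hgp3T : g.symm p3 ∈ T := by simp [hT]
  have hp1gA : p1 ∉ gA := fun hc => hTnotA _ hgp1T ((hmem_gA p1).1 hc)
  have hp2gA : p2 ∉ gA := fun hc => hTnotA _ hgp2T ((hmem_gA p2).1 hc)
  have hp3gA : p3 ∉ gA := fun hc => hTnotA _ hgp3T ((hmem_gA p3).1 hc)
  have hp1A : p1 ∉ A := hTnotA _ hp1T
  have hp2A : p2 ∉ A := hTnotA _ hp2T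
  have hp3A : p3 ∉ A := hTnotA _ hp3T
  -- the copy R of A, near p3, away from everything
  have hclosed : IsClosed ((A ∪ gA) ∪ {p1, p2}) :=
    (hAc.union hgAc).isClosed.union (Set.toFinite _).isClosed
  obtain ⟨U, hUc, hp3U, hU⟩ := compact_exists_isClopen_in_isOpen (x := p3)
    hclosed.isOpen_compl (by
      simp only [Set.mem_compl_iff, Set.mem_union, Set.mem_insert_iff, Set.mem_singleton_iff]
      push_neg
      refine ⟨⟨hp3A, hp3gA⟩, ?_, ?_⟩
      · intro hc; exact hp3.2 (by rw [hc]; exact Set.mem_insert_iff.2 (Or.inr rfl))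
      · intro hc; exact hp3.2 (by rw [hc]; exact Set.mem_insert p2 _))
  obtain ⟨R, hRc, hRU, hp3R, σ, σ', hσ⟩ := copy_piece huss hp3v hUc hp3U A hAc
  have hRA : Disjoint R A := Set.disjoint_left.2 fun x hxR hxA =>
    (hU (hRU hxR)) (Or.inl (Or.inl hxA))
  have hRgA : Disjoint R gA := Set.disjoint_left.2 fun x hxR hxA =>
    (hU (hRU hxR)) (Or.inl (Or.inr hxA))
  have hp1R : p1 ∉ R := fun hc => (hU (hRU hc)) (Or.inr (Set.mem_insert p1 _))
  have hp2R : p2 ∉ R := fun hc => (hU (hRU hc)) (Or.inr (Set.mem_insert_iff.2 (Or.inr rfl)))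
  -- absorptions
  have hβ1 : GPH F Set.univ (gA ∪ R)ᶜ := absorb huss (hgAc.union hRc) hp1v hp2v hp12
    (fun hc => hc.elim hp1gA hp1R) (fun hc => hc.elim hp2gA hp2R)
  have hβ2 : GPH F Set.univ (A ∪ R)ᶜ := absorb huss (hAc.union hRc) hp1v hp2v hp12
    (fun hc => hc.elim hp1A hp1R) (fun hc => hc.elim hp2A hp2R)
  obtain ⟨c0, c0', hc0g⟩ := hβ1.symm.comp hβ2
  -- the good map from gA to A coming from g itself
  have φg : IsGoodMap F gA A ⇑g.symm ⇑g :=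
    { mapsTo := by rintro y ⟨x, hx, rfl⟩; rwa [Equiv.symm_apply_apply]
      mapsTo' := fun x hx => ⟨x, hx, rfl⟩
      left := fun y _ => g.apply_symm_apply y
      right := fun x _ => g.symm_apply_apply x
      cont := hgC.2.1.continuousOn
      cont' := hgC.1.continuousOn
      mem_iff := fun x _ => by
        have := (hgC.2.2 (g.symm x)).symm
        rwa [g.apply_symm_apply] at this }
  -- the homeomorphism c
  have hunion : gA ∪ (gA ∪ R)ᶜ = A ∪ (A ∪ R)ᶜ := by
    have e1 : ∀ (S : Set E), Disjoint R S → S ∪ (S ∪ R)ᶜ = Rᶜ := by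
      intro S hdis
      ext x
      constructor
      · rintro (hx | hx)
        · exact fun hc => hdis.le_bot ⟨hc, hx⟩
        · exact fun hc => hx (Or.inr hc)
      · intro hx
        by_cases hxS : x ∈ S
        · exact Or.inl hxS
        · exact Or.inr (fun hc => hc.elim hxS hx)
    rw [e1 gA hRgA, e1 A hRA]
  obtain ⟨c, hcmem, hcon1, hcon2, hcout, hcs1, hcs2, hcsout⟩ := two_glue F hgAc
    (hgAc.union hRc).compl hAc (hAc.union hRc).compl
    (Set.disjoint_left.2 fun x hx hc => hc (Or.inl hx))
    (Set.disjoint_left.2 fun x hx hc => hc (Or.inl hx))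
    φg ⟨hc0g.mapsTo, hc0g.mapsTo', hc0g.left, hc0g.right, hc0g.cont, hc0g.cont', hc0g.mem_iff⟩
    hunion
  -- the swap τ between gA and R
  obtain ⟨τ, hτmem, hτ1, hτ2, hτout, hτs1, hτs2, hτsout⟩ := two_glue F hgAc hRc hRc hgAc
    hRgA.symm hRgA (φg.comp hσ) (hσ.symm.comp φg.symm) (Set.union_comm gA R)
  -- the commutator u with u ∘ g = id on A
  set u : Equiv.Perm E := c * τ * c⁻¹ * τ⁻¹ with hudef
  have humem : u ∈ EndsHomeo F :=
    mul_mem (mul_mem (mul_mem hcmem hτmem) (inv_mem hcmem)) (inv_mem hτmem)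
  have hu : ∀ x ∈ gA, u x = g.symm x := by
    intro x hx
    have hgsx : g.symm x ∈ A := φg.mapsTo hx
    have hR1 : σ (g.symm x) ∈ R := hσ.mapsTo hgsx
    have h1 : τ.symm x = σ (g.symm x) := by
      have := hτs2 x hx
      rw [this]
      rfl
    have h2 : c.symm (σ (g.symm x)) = σ (g.symm x) := by
      apply hcsout
      intro hc
      rcases hc with hc | hc
      · exact hRgA.le_bot ⟨hR1, hc⟩
      · exact hc (Or.inr hR1)
    have h3 : τ (σ (g.symm x)) = x := by
      have := hτ2 _ hR1
      rw [this]
      show g (σ' (σ (g.symm x))) = x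
      rw [hσ.left _ hgsx, Equiv.apply_symm_apply]
    have h4 : c x = g.symm x := hcon1 x hx
    show c (τ (c.symm (τ.symm x))) = g.symm x
    rw [h1, h2, h3, h4]
  set w : Equiv.Perm E := u * g with hwdef
  have hwmem : w ∈ EndsHomeo F := mul_mem humem hg
  have hwsupp : ∀ x ∉ Aᶜ, w x = x := by
    intro x hx
    rw [Set.notMem_compl_iff] at hx
    have hgx : g x ∈ gA := ⟨x, hx, rfl⟩
    show u (g x) = x
    rw [hu _ hgx, Equiv.symm_apply_apply]
  have hm1Ac : m1 ∉ Aᶜ := fun hc => hc hm1A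
  have hm2Ac : m2 ∉ Aᶜ := fun hc => hc hm2A
  obtain ⟨a, t, hamem, htmem, hw⟩ := swindle huss hAc.compl hm1v hm2v hm12 hm1Ac hm2Ac
    hwmem hwsupp
  refine ⟨[⟨u⁻¹, inv_mem humem⟩, ⟨w, hwmem⟩], by simp, ?_, ?_⟩
  · intro e he
    simp only [List.mem_cons, List.not_mem_nil, or_false] at he
    rcases he with rfl | rfl
    · refine ⟨⟨τ, hτmem⟩, ⟨c, hcmem⟩, ?_⟩
      apply Subtype.ext
      show u⁻¹ = τ * c * τ⁻¹ * c⁻¹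
      rw [hudef]
      group
    · exact ⟨⟨a, hamem⟩, ⟨t, htmem⟩, Subtype.ext hw⟩
  · simp only [List.prod_cons, List.prod_nil, mul_one]
    apply Subtype.ext
    show u⁻¹ * w = g
    rw [hwdef, inv_mul_cancel_left]
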